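/- Let k, n be integers with 2 ≤ k ≤ n/2. Let A(k,n) be the ℂ-subalgebra of the polynomial ring ℂ[x_{cd} : 1 ≤ c ≤ k, 1 ≤ d ≤ n] generated by all maximal minors P(I) of the generic k × n matrix (x_{cd}) (where I ranges over k-subsets of ℤ/nℤ), let J be the ideal of A(k,n) generated by {P(I) − 1 : I a consecutive k-subset}, and let π : A(k,n) → A(k,n)/J be the quotient map. Then the specialised Plücker frieze is a tame SL_k-frieze over A(k,n)/J; explicitly: (i) for every r ∈ ℤ/nℤ and every m in the cyclic closed interval [r+k−1, r−1], the k × k matrix whose (i,j) entry (1 ≤ i,j ≤ k) is π(P([r+i−1]^{k−1} ∪ {m+j−1})) has determinant 1; and (ii) for every r ∈ ℤ/nℤ and every m in the cyclic closed interval [r+k, r−2], the (k+1) × (k+1) matrix whose (i,j) entry (1 ≤ i,j ≤ k+1) is π(P([r+i−1]^{k−1} ∪ {m+j−1})) has determinant 0. -/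

import Mathlib

/-- Representative of `x : ZMod n` in `{1, …, n}`. -/
def rep (n : ℕ) (x : ZMod n) : ℕ := if x.val = 0 then n else x.val

/-- The cyclic segment `[r]^ℓ = {r, r+1, …, r+ℓ-1}` in `ZMod n`. -/
def cSeg (n : ℕ) (r : ZMod n) (ℓ : ℕ) : Finset (ZMod n) :=
  (Finset.range ℓ).image (fun t : ℕ => r + (t : ZMod n))

/-- The cyclic closed interval `[a,b] = {a, a+1, …, b}` in `ZMod n`. -/
def cIcc (n : ℕ) (a b : ZMod n) : Finset (ZMod n) := cSeg n a ((b - a).val + 1)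

/-- The Plücker coordinate `P(I)`: the determinant of the `k × k` submatrix of `M` on the
columns indexed by `I`, taken in increasing order of the representatives in `{1,…,n}`;
it is `0` if `I` is not a `k`-subset. -/
noncomputable def pluck {R : Type*} [CommRing R] {k n : ℕ}
    (M : Matrix (Fin k) (ZMod n) R) (I : Finset (ZMod n)) : R :=
  if h : (I.image (rep n)).card = k ∧ I.card = k then
    Matrix.det (Matrix.of fun i j : Fin k =>
      M i ((((I.image (rep n)).orderIsoOfFin h.1 j : ℕ) : ZMod n)))
  else 0

/-- The generic `k × n` matrix of indeterminates. -/
noncomputable def genericM (k n : ℕ) :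
    Matrix (Fin k) (ZMod n) (MvPolynomial (Fin k × ZMod n) ℂ) :=
  fun c d => MvPolynomial.X (c, d)

/-- The homogeneous coordinate ring `A(k,n)` of the Grassmannian: the `ℂ`-subalgebra of
the polynomial ring generated by the maximal minors `P(I)` of the generic `k × n` matrix,
for `I` ranging over the `k`-subsets of `ZMod n`. -/
noncomputable def grA (k n : ℕ) : Subalgebra ℂ (MvPolynomial (Fin k × ZMod n) ℂ) :=
  Algebra.adjoin ℂ
    {x | ∃ I : Finset (ZMod n), I.card = k ∧ x = pluck (genericM k n) I}

lemma pluck_mem_grA (k n : ℕ) (I : Finset (ZMod n)) :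
    pluck (genericM k n) I ∈ grA k n := by
  by_cases h : (I.image (rep n)).card = k ∧ I.card = k
  · exact Algebra.subset_adjoin ⟨I, h.2, rfl⟩
  · rw [pluck, dif_neg h]
    exact zero_mem _

/-- The Plücker coordinate `P(I)` as an element of `A(k,n)`. -/
noncomputable def grP (k n : ℕ) (I : Finset (ZMod n)) : grA k n :=
  ⟨pluck (genericM k n) I, pluck_mem_grA k n I⟩

/-- The ideal `J` of `A(k,n)` generated by `P(I) - 1` for `I` a consecutive `k`-subset. -/
noncomputable def grJ (k n : ℕ) : Ideal (grA k n) :=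
  Ideal.span {y | ∃ r : ZMod n, y = grP k n (cSeg n r k) - 1}


open Fin.NatCast

section Helpers

lemma mod_two_range {a n : ℕ} (hn : 0 < n) (h : a < 2*n) :
    a % n = if n ≤ a then a - n else a := by
  split
  · rw [Nat.mod_eq_sub_mod ‹_›, Nat.mod_eq_of_lt (by omega)]
  · exact Nat.mod_eq_of_lt (by omega)

lemma mod_three_range {a n : ℕ} (hn : 0 < n) (h : a < 3*n) :
    a % n = if 2*n ≤ a then a - 2*n else if n ≤ a then a - n else a := by
  split
  · rw [Nat.mod_eq_sub_mod (by omega), Nat.mod_eq_sub_mod (by omega),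
      Nat.mod_eq_of_lt (by omega)]
    omega
  · exact mod_two_range hn (by omega)

lemma count_range (L p a : ℕ) :
    ((Finset.range L).filter (fun ℓ => p ≤ a + ℓ)).card = L - (p - a) := by
  induction L with
  | zero => simp
  | succ L ih =>
    rw [Finset.range_add_one, Finset.filter_insert]
    split
    · rw [Finset.card_insert_of_notMem (by simp)]
      omega
    · omega

variable {n : ℕ} [NeZero n]

lemma val_sub_one (x : ZMod n) : (x - 1).val = (x.val + (n-1)) % n := by
  have h1 : ((n - 1 : ℕ) : ZMod n) = -1 := by
    have hn : 1 ≤ n := NeZero.one_le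
    have : ((n : ℕ) : ZMod n) = 0 := ZMod.natCast_self n
    push_cast [Nat.cast_sub hn]
    rw [this]; ring
  have : x - 1 = x + ((n - 1 : ℕ) : ZMod n) := by rw [h1]; ring
  have h2 : (n-1) % n = n - 1 := Nat.mod_eq_of_lt (by have := NeZero.one_le (n := n); omega)
  rw [this, ZMod.val_add, ZMod.val_natCast, h2]

lemma rep_eq (x : ZMod n) : rep n x = (x - 1).val + 1 := by
  have hlt : x.val < n := ZMod.val_lt x
  have hn : 1 ≤ n := NeZero.one_le
  rw [rep, val_sub_one]
  have hm := mod_two_range (a := x.val + (n-1)) (n := n) (by omega) (by omega)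
  split
  · rename_i h
    rw [h] at hm ⊢
    rw [if_neg (by omega)] at hm
    omega
  · rename_i h
    rw [if_pos (by omega)] at hm
    omega

lemma rep_cast (x : ZMod n) : ((rep n x : ℕ) : ZMod n) = x := by
  rw [rep]
  split
  · rename_i h
    rw [ZMod.natCast_self]
    exact ((ZMod.val_eq_zero x).mp h).symm
  · rw [ZMod.natCast_val, ZMod.cast_id]

lemma rep_inj : Function.Injective (rep n) := by
  intro x y h
  have := rep_cast (n := n) x
  rw [h, rep_cast] at this
  exact this.symm

lemma val_shift (x : ZMod n) (a : ℕ) :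
    (x + (a : ZMod n) - 1).val = ((x - 1).val + a) % n := by
  have : x + (a : ZMod n) - 1 = (x - 1) + (a : ZMod n) := by ring
  rw [this, ZMod.val_add, ZMod.val_natCast]
  conv_rhs => rw [Nat.add_mod]
  rw [Nat.mod_eq_of_lt (ZMod.val_lt _)]

lemma rep_shift_lt (x : ZMod n) (a : ℕ) (ha : a < n) :
    rep n (x + (a : ZMod n)) < rep n x ↔ n ≤ (x - 1).val + a := by
  have hc : (x - 1).val < n := ZMod.val_lt _
  rw [rep_eq, rep_eq, val_shift]
  have hm := mod_two_range (a := (x-1).val + a) (n := n) (by omega) (by omega)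
  split at hm <;> omega

end Helpers
section CSeg

variable {n : ℕ} [NeZero n]

lemma mem_cSeg {ℓ : ℕ} (hℓ : ℓ ≤ n) {x s : ZMod n} :
    x ∈ cSeg n s ℓ ↔ (x - s).val < ℓ := by
  rw [cSeg]; simp only [Finset.mem_image, Finset.mem_range]
  constructor
  · rintro ⟨t, ht, rfl⟩
    have h1 : (s + (t : ZMod n) - s) = (t : ZMod n) := by ring
    rw [h1, ZMod.val_natCast, Nat.mod_eq_of_lt (by omega)]; exact ht
  · intro h
    refine ⟨(x - s).val, h, ?_⟩
    rw [ZMod.natCast_val, ZMod.cast_id]; ring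

lemma cSeg_card {ℓ : ℕ} (hℓ : ℓ ≤ n) (s : ZMod n) : (cSeg n s ℓ).card = ℓ := by
  rw [cSeg, Finset.card_image_of_injOn, Finset.card_range]
  intro t1 h1 t2 h2 he
  simp only [Finset.coe_range, Set.mem_Iio] at h1 h2
  have h3 : ((t1 : ZMod n)) = t2 := add_left_cancel he
  have h4 := congrArg ZMod.val h3
  rwa [ZMod.val_natCast, ZMod.val_natCast, Nat.mod_eq_of_lt (by omega),
    Nat.mod_eq_of_lt (by omega)] at h4

end CSeg

section Sign

lemma sign_addRight {K : ℕ} [NeZero K] (e : Fin K) :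
    Equiv.Perm.sign (Equiv.addRight e) = (-1 : ℤˣ) ^ ((K - 1) * (e : ℕ)) := by
  obtain ⟨K', rfl⟩ : ∃ K', K = K' + 1 := ⟨K - 1, by have := NeZero.pos K; omega⟩
  have hrot : ∀ v : ℕ, (finRotate (K' + 1)) ^ v = Equiv.addRight ((v : ℕ) : Fin (K'+1)) := by
    intro v
    induction v with
    | zero => ext x; simp
    | succ v ih =>
      rw [pow_succ, ih]; ext x
      simp only [Equiv.Perm.coe_mul, Function.comp_apply, Equiv.coe_addRight,
        finRotate_succ_apply, Nat.cast_add, Nat.cast_one]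
      congr 1; abel
  calc Equiv.Perm.sign (Equiv.addRight e)
      = Equiv.Perm.sign ((finRotate (K'+1)) ^ (e : ℕ)) := by
        rw [hrot, Fin.cast_val_eq_self]
    _ = (Equiv.Perm.sign (finRotate (K'+1))) ^ (e : ℕ) := map_pow _ _ _
    _ = ((-1 : ℤˣ) ^ K') ^ (e : ℕ) := by rw [sign_finRotate, Nat.add_sub_cancel]
    _ = (-1 : ℤˣ) ^ ((K' + 1 - 1) * (e : ℕ)) := by rw [← pow_mul]; norm_num

lemma det_colperm {R : Type*} [CommRing R] {K : ℕ} [NeZero K]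
    (A : Matrix (Fin K) (Fin K) R) (e : Fin K) :
    Matrix.det (Matrix.of fun i j => A i (j + e)) = (-1 : R) ^ ((K - 1) * (e : ℕ)) * A.det := by
  have h : (Matrix.of fun i j => A i (j + e)) = A.submatrix id (Equiv.addRight e) := rfl
  rw [h, Matrix.det_permute', sign_addRight]
  push_cast
  ring

lemma sig_pow_congr {R : Type*} [Monoid R] [HasDistribNeg R] {k a b : ℕ}
    (h : k % 2 = 0 → a % 2 = b % 2) : ((-1 : R) ^ (k - 1)) ^ a = ((-1 : R) ^ (k-1)) ^ b := by
  rcases Nat.even_or_odd (k - 1) with he | ho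
  · rw [he.neg_one_pow, one_pow, one_pow]
  · have hk : k % 2 = 0 := by have := Nat.odd_iff.mp ho; omega
    have hab := h hk
    rw [ho.neg_one_pow]
    rcases Nat.even_or_odd a with ha | ha
    · have hb : Even b := by rcases ha with ⟨p, hp⟩; exact ⟨b / 2, by omega⟩
      rw [ha.neg_one_pow, hb.neg_one_pow]
    · have hb : Odd b := by rcases ha with ⟨p, hp⟩; exact ⟨b / 2, by omega⟩
      rw [ha.neg_one_pow, hb.neg_one_pow]

lemma sig_sq {R : Type*} [Monoid R] [HasDistribNeg R] (m e : ℕ) :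
    ((-1 : R) ^ m) ^ e * ((-1 : R) ^ m) ^ e = 1 := by
  rw [← pow_add, ← pow_mul]
  exact Even.neg_one_pow ⟨m * e, by ring⟩

end Sign
section CYC

variable {n : ℕ} [NeZero n]

lemma pluck_cyclic {R : Type*} [CommRing R] {K : ℕ} (hK : 0 < K)
    (M : Matrix (Fin K) (ZMod n) R) (s : ZMod n) (f : Fin K → ZMod n)
    (hmono : StrictMono fun j => (f j - s).val) :
    pluck M (Finset.image f Finset.univ) =
      (-1 : R) ^ ((K - 1) * ((Finset.univ.filter fun j => rep n (f j) < rep n s).card)) *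
        Matrix.det (Matrix.of fun i j => M i (f j)) := by
  haveI : NeZero K := ⟨hK.ne'⟩
  have hnpos : 0 < n := NeZero.pos n
  set a : Fin K → ℕ := fun j => (f j - s).val with ha_def
  set c := (s - 1).val with hc_def
  have hc : c < n := ZMod.val_lt _
  have ha : ∀ j, a j < n := fun j => ZMod.val_lt _
  have hfval : ∀ j, f j = s + ((a j : ℕ) : ZMod n) := by
    intro j
    have h1 : ((a j : ℕ) : ZMod n) = f j - s := by
      simp only [ha_def, ZMod.natCast_val, ZMod.cast_id]
    rw [h1]; ring
  have hrep : ∀ j, rep n (f j) = (c + a j) % n + 1 := by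
    intro j
    conv_lhs => rw [hfval j]
    rw [rep_eq, val_shift]
  have hreps : rep n s = c + 1 := by rw [rep_eq]
  have hwrap : ∀ j, (rep n (f j) < rep n s ↔ n ≤ c + a j) := by
    intro j
    have haj := ha j
    rw [hrep, hreps]
    have hm := mod_two_range (a := c + a j) hnpos (by omega)
    split at hm <;> omega
  have hfilter : (Finset.univ.filter fun j => rep n (f j) < rep n s) =
      (Finset.univ.filter fun j => n ≤ c + a j) :=
    Finset.filter_congr (fun j _ => by rw [hwrap])
  rw [hfilter]
  set d := (Finset.univ.filter fun j : Fin K => n ≤ c + a j).card with hd_def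
  have hdK : d ≤ K := by
    rw [hd_def]
    exact le_trans (Finset.card_filter_le _ _) (by simp)
  have hthr : ∀ j : Fin K, (n ≤ c + a j) ↔ K - d ≤ (j : ℕ) := by
    intro j
    constructor
    · intro hj
      by_contra hlt
      push_neg at hlt
      have hsub : Finset.Ici j ⊆ Finset.univ.filter (fun j => n ≤ c + a j) := by
        intro x hx
        rw [Finset.mem_Ici] at hx
        exact Finset.mem_filter.mpr ⟨Finset.mem_univ _,
          le_trans hj (Nat.add_le_add_left (hmono.monotone hx) c)⟩
      have hcard := Finset.card_le_card hsub
      rw [Fin.card_Ici] at hcard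
      have := j.isLt
      omega
    · intro hge
      by_contra hno
      have hsub : Finset.univ.filter (fun j => n ≤ c + a j) ⊆ Finset.Ioi j := by
        intro x hx
        rw [Finset.mem_filter] at hx
        rw [Finset.mem_Ioi]
        by_contra hxe
        push_neg at hxe
        exact hno (le_trans hx.2 (Nat.add_le_add_left (hmono.monotone hxe) c))
      have hcard := Finset.card_le_card hsub
      rw [Fin.card_Ioi] at hcard
      have := j.isLt
      omega
  clear_value d
  set e : Fin K := (((K - d : ℕ)) : Fin K) with he_def
  clear_value e
  have hπ : ∀ j : Fin K, ((j + e : Fin K) : ℕ) = ((j : ℕ) + (K - d)) % K := by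
    intro j
    rw [Fin.add_def, he_def, Fin.val_natCast]
    conv_rhs => rw [Nat.add_mod]
    rw [Nat.mod_eq_of_lt j.isLt]
  have hπval : ∀ j : Fin K, ((j:ℕ) < d → ((j + e : Fin K) : ℕ) = (j:ℕ) + (K - d)) ∧
      (d ≤ (j:ℕ) → ((j + e : Fin K) : ℕ) = (j:ℕ) - d) := by
    intro j
    have hj := j.isLt
    constructor
    · intro h
      rw [hπ j, Nat.mod_eq_of_lt (by omega)]
    · intro h
      rw [hπ j]
      have h2 := mod_two_range (a := (j:ℕ) + (K - d)) (NeZero.pos K) (by omega)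
      rw [h2, if_pos (by omega)]
      omega
  have hgmono : StrictMono fun j : Fin K => rep n (f (j + e)) := by
    intro j1 j2 hlt
    have h12 : (j1 : ℕ) < (j2 : ℕ) := hlt
    have hj1 := j1.isLt
    have hj2 := j2.isLt
    simp only
    rw [hrep, hrep]
    rcases lt_or_ge (j1 : ℕ) d with h1 | h1 <;> rcases lt_or_ge (j2 : ℕ) d with h2 | h2
    · -- both wrapped
      have hv1 := (hπval j1).1 h1
      have hv2 := (hπval j2).1 h2
      have hw1 : n ≤ c + a (j1 + e) := (hthr _).mpr (by omega)
      have hw2 : n ≤ c + a (j2 + e) := (hthr _).mpr (by omega)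
      have hlt' : a (j1 + e) < a (j2 + e) := hmono (by rw [Fin.lt_def]; omega)
      have hm1 := mod_two_range (a := c + a (j1 + e)) hnpos (by have := ha (j1+e); omega)
      have hm2 := mod_two_range (a := c + a (j2 + e)) hnpos (by have := ha (j2+e); omega)
      rw [if_pos hw1] at hm1
      rw [if_pos hw2] at hm2
      omega
    · -- j1 wrapped, j2 not
      have hv1 := (hπval j1).1 h1
      have hv2 := (hπval j2).2 h2
      have hw1 : n ≤ c + a (j1 + e) := (hthr _).mpr (by omega)
      have hw2 : ¬ n ≤ c + a (j2 + e) := fun hcon => by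
        have := (hthr _).mp hcon
        omega
      have hm1 := mod_two_range (a := c + a (j1 + e)) hnpos (by have := ha (j1+e); omega)
      have hm2 := mod_two_range (a := c + a (j2 + e)) hnpos (by have := ha (j2+e); omega)
      rw [if_pos hw1] at hm1
      rw [if_neg hw2] at hm2
      have := ha (j1 + e)
      omega
    · omega
    · -- both unwrapped
      have hv1 := (hπval j1).2 h1
      have hv2 := (hπval j2).2 h2
      have hw1 : ¬ n ≤ c + a (j1 + e) := fun hcon => by
        have := (hthr _).mp hcon
        omega
      have hw2 : ¬ n ≤ c + a (j2 + e) := fun hcon => by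
        have := (hthr _).mp hcon
        omega
      have hlt' : a (j1 + e) < a (j2 + e) := hmono (by rw [Fin.lt_def]; omega)
      have hm1 := mod_two_range (a := c + a (j1 + e)) hnpos (by have := ha (j1+e); omega)
      have hm2 := mod_two_range (a := c + a (j2 + e)) hnpos (by have := ha (j2+e); omega)
      rw [if_neg hw1] at hm1
      rw [if_neg hw2] at hm2
      omega
  have hfinj : Function.Injective f := by
    intro j1 j2 h
    exact hmono.injective (show a j1 = a j2 by rw [ha_def]; simp [h])
  have hIcard : (Finset.image f Finset.univ).card = K := by
    rw [Finset.card_image_of_injective _ hfinj, Finset.card_univ, Fintype.card_fin]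
  have hIrep : ((Finset.image f Finset.univ).image (rep n)).card = K := by
    rw [Finset.card_image_of_injective _ rep_inj, hIcard]
  have hpair : ((Finset.image f Finset.univ).image (rep n)).card = K ∧
      (Finset.image f Finset.univ).card = K := ⟨hIrep, hIcard⟩
  have horder : ∀ j : Fin K,
      ((((Finset.image f Finset.univ).image (rep n)).orderIsoOfFin hpair.1 j : ℕ) : ZMod n)
        = f (j + e) := by
    have hmem : ∀ x : Fin K, rep n (f (x + e)) ∈ (Finset.image f Finset.univ).image (rep n) :=
      fun x => Finset.mem_image_of_mem _ (Finset.mem_image_of_mem f (Finset.mem_univ _))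
    have huniq := Finset.orderEmbOfFin_unique hpair.1 hmem hgmono
    intro j
    have h1 : rep n (f (j + e)) =
        ((Finset.image f Finset.univ).image (rep n)).orderEmbOfFin hpair.1 j :=
      congrFun huniq j
    rw [Finset.coe_orderIsoOfFin_apply, ← h1, rep_cast]
  rw [pluck, dif_pos hpair]
  have hdet1 : (Matrix.of fun i j : Fin K =>
      M i ((((Finset.image f Finset.univ).image (rep n)).orderIsoOfFin hpair.1 j : ℕ) : ZMod n))
      = Matrix.of fun i j => (Matrix.of fun i' j' => M i' (f j')) i (j + e) := by
    ext i j
    simp only [Matrix.of_apply]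
    rw [horder j]
  rw [hdet1, det_colperm]
  congr 1
  rw [he_def, Fin.val_natCast, pow_mul, pow_mul]
  apply sig_pow_congr
  intro hk2
  rcases Nat.eq_zero_or_pos d with hd0 | hdpos
  · rw [hd0]
    simp
  · rw [Nat.mod_eq_of_lt (show K - d < K by omega)]
    omega

end CYC
section Grass

variable {k n : ℕ}

/-- determinant of k consecutive columns starting at x, in cyclic order -/
noncomputable def Dl (k n : ℕ) (x : ZMod n) : MvPolynomial (Fin k × ZMod n) ℂ :=
  Matrix.det (Matrix.of fun a b : Fin k => genericM k n a (x + ((b : ℕ) : ZMod n)))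

/-- basis covector -/
noncomputable def ebasis (k n : ℕ) (l : Fin k) : Fin k → MvPolynomial (Fin k × ZMod n) ℂ :=
  fun a => if l = a then 1 else 0

/-- the covector w ↦ det(v_s, ..., v_{s+k-2}, w) -/
noncomputable def fcov (k n : ℕ) (s : ZMod n) (w : Fin k → MvPolynomial (Fin k × ZMod n) ℂ) :
    MvPolynomial (Fin k × ZMod n) ℂ :=
  Matrix.det (Matrix.of fun a b : Fin k =>
    if (b : ℕ) < k - 1 then genericM k n a (s + ((b : ℕ) : ZMod n)) else w a)

/-- column x of the generic matrix -/
noncomputable def vcol (k n : ℕ) (x : ZMod n) : Fin k → MvPolynomial (Fin k × ZMod n) ℂ :=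
  fun a => genericM k n a x

lemma sig_mul_self {R : Type*} [Monoid R] [HasDistribNeg R] (m e : ℕ) :
    (-1 : R) ^ (m * e) * (-1 : R) ^ (m * e) = 1 := by
  rw [← pow_add]
  exact Even.neg_one_pow ⟨m * e, by ring⟩

lemma natCast_zmod_inj {a b : ℕ} (ha : a < n) (hb : b < n)
    (h : ((a : ℕ) : ZMod n) = ((b : ℕ) : ZMod n)) : a = b := by
  haveI : NeZero n := ⟨by omega⟩
  have := congrArg ZMod.val h
  rwa [ZMod.val_natCast, ZMod.val_natCast, Nat.mod_eq_of_lt ha, Nat.mod_eq_of_lt hb] at this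

lemma det_updateCol_finsum {R : Type*} [CommRing R] {K : ℕ} (A : Matrix (Fin K) (Fin K) R)
    (j : Fin K) {ι : Type*} [DecidableEq ι] (s : Finset ι) (coef : ι → R) (g : ι → (Fin K → R)) :
    Matrix.det (A.updateCol j (∑ l ∈ s, coef l • g l)) =
      ∑ l ∈ s, coef l * Matrix.det (A.updateCol j (g l)) := by
  induction s using Finset.induction_on with
  | empty =>
    simp only [Finset.sum_empty]
    apply Matrix.det_eq_zero_of_column_eq_zero j
    intro i
    rw [Matrix.updateCol_self]
    rfl
  | @insert a s ha ih =>
    rw [Finset.sum_insert ha, Finset.sum_insert ha, Matrix.det_updateCol_add,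
      Matrix.det_updateCol_smul, ih]

section WithHyp
variable (hk : 2 ≤ k) (hkn : 2 * k ≤ n)
include hk hkn

lemma consec_block (x : ZMod n) :
    pluck (genericM k n) (cSeg n x k) =
      (-1 : MvPolynomial (Fin k × ZMod n) ℂ) ^ ((k - 1) * (k - (n - (x - 1).val))) *
        Dl k n x := by
  haveI : NeZero n := ⟨by omega⟩
  have himg : cSeg n x k =
      Finset.image (fun b : Fin k => x + ((b : ℕ) : ZMod n)) Finset.univ := by
    rw [cSeg]
    ext y
    simp only [Finset.mem_image, Finset.mem_range, Finset.mem_univ, true_and]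
    constructor
    · rintro ⟨t, ht, rfl⟩; exact ⟨⟨t, ht⟩, rfl⟩
    · rintro ⟨b, rfl⟩; exact ⟨(b : ℕ), b.isLt, rfl⟩
  have hval : ∀ b : Fin k, ((x + ((b : ℕ) : ZMod n)) - x).val = (b : ℕ) := by
    intro b
    have h1 : x + ((b : ℕ) : ZMod n) - x = ((b : ℕ) : ZMod n) := by ring
    rw [h1, ZMod.val_natCast, Nat.mod_eq_of_lt (by have := b.isLt; omega)]
  have hmono : StrictMono fun b : Fin k => ((x + ((b : ℕ) : ZMod n)) - x).val := by
    intro b1 b2 hb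
    simp only [hval]; exact hb
  have h := pluck_cyclic (n := n) (by omega) (genericM k n) x _ hmono
  have hcardEq : (Finset.univ.filter fun b : Fin k =>
      rep n (x + ((b : ℕ) : ZMod n)) < rep n x).card = k - (n - (x - 1).val) := by
    have hcong : (Finset.univ.filter fun b : Fin k =>
        rep n (x + ((b : ℕ) : ZMod n)) < rep n x) =
        Finset.univ.filter fun b : Fin k => n ≤ (x - 1).val + (b : ℕ) :=
      Finset.filter_congr (fun b _ => by
        rw [rep_shift_lt x (b : ℕ) (by have := b.isLt; omega)])
    rw [hcong, Finset.card_filter,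
      Fin.sum_univ_eq_sum_range (fun t => if n ≤ (x - 1).val + t then 1 else 0),
      ← Finset.card_filter, count_range]
  rw [himg, h, hcardEq]
  rfl

lemma Dl_eq_sig_pluck (x : ZMod n) :
    Dl k n x = (-1 : MvPolynomial (Fin k × ZMod n) ℂ) ^ ((k - 1) * (k - (n - (x - 1).val))) *
      pluck (genericM k n) (cSeg n x k) := by
  rw [consec_block hk hkn x, ← mul_assoc, sig_mul_self, one_mul]

lemma fcov_zero_of_mem {s y : ZMod n} (h : (y - s).val < k - 1) :
    fcov k n s (vcol k n y) = 0 := by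
  haveI : NeZero n := ⟨by omega⟩
  apply Matrix.det_zero_of_column_eq (i := (⟨(y - s).val, by omega⟩ : Fin k))
    (j := (⟨k - 1, by omega⟩ : Fin k))
  · intro hcon
    rw [Fin.mk.injEq] at hcon
    omega
  · intro a
    simp only [Matrix.of_apply]
    rw [if_pos (by simpa using h), if_neg (by simp)]
    have h1 : s + (((y - s).val : ℕ) : ZMod n) = y := by
      rw [ZMod.natCast_val, ZMod.cast_id]; ring
    rw [h1]
    rfl

lemma fcov_linear (s : ZMod n) (w : Fin k → MvPolynomial (Fin k × ZMod n) ℂ) :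
    fcov k n s w = ∑ l : Fin k, w l * fcov k n s (ebasis k n l) := by
  have hup : ∀ u : Fin k → MvPolynomial (Fin k × ZMod n) ℂ,
      (Matrix.of fun a b : Fin k =>
        if (b : ℕ) < k - 1 then genericM k n a (s + ((b : ℕ) : ZMod n)) else u a) =
      (Matrix.of fun a b : Fin k =>
        if (b : ℕ) < k - 1 then genericM k n a (s + ((b : ℕ) : ZMod n)) else 0).updateCol
        (⟨k - 1, by omega⟩ : Fin k) u := by
    intro u
    ext a b
    rw [Matrix.updateCol_apply]
    rcases eq_or_ne b (⟨k - 1, by omega⟩ : Fin k) with hb | hb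
    · rw [if_pos hb, hb]
      simp only [Matrix.of_apply]
      rw [if_neg (by simp)]
    · rw [if_neg hb]
      have hblt : (b : ℕ) < k - 1 := by
        have := b.isLt
        have : (b : ℕ) ≠ k - 1 := fun hc => hb (Fin.ext hc)
        omega
      simp only [Matrix.of_apply]
      rw [if_pos hblt, if_pos hblt]
  have hw : w = ∑ l : Fin k, w l • ebasis k n l := by
    unfold ebasis
    exact pi_eq_sum_univ w
  rw [fcov, hup w]
  conv_lhs => rw [hw]
  rw [det_updateCol_finsum]
  refine Finset.sum_congr rfl fun l _ => ?_
  rw [fcov, hup (ebasis k n l)]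

end WithHyp
end Grass
section Grass2

variable {k n : ℕ} (hk : 2 ≤ k) (hkn : 2 * k ≤ n)
include hk hkn

lemma Dl_ne_zero (x : ZMod n) : Dl k n x ≠ 0 := by
  haveI : NeZero n := ⟨by omega⟩
  intro h0
  have hdet := congrArg (MvPolynomial.eval (fun p : Fin k × ZMod n =>
      if p.2 = x + ((p.1 : ℕ) : ZMod n) then (1 : ℂ) else 0)) h0
  rw [map_zero, Dl, RingHom.map_det, RingHom.mapMatrix_apply] at hdet
  have hone : (Matrix.of fun a b : Fin k => genericM k n a (x + ((b : ℕ) : ZMod n))).map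
      (MvPolynomial.eval (fun p : Fin k × ZMod n =>
        if p.2 = x + ((p.1 : ℕ) : ZMod n) then (1 : ℂ) else 0)) = 1 := by
    ext a b
    simp only [Matrix.map_apply, Matrix.of_apply, genericM, MvPolynomial.eval_X,
      Matrix.one_apply]
    have hiff : x + ((b : ℕ) : ZMod n) = x + ((a : ℕ) : ZMod n) ↔ a = b := by
      constructor
      · intro h
        have h2 := add_left_cancel h
        exact (Fin.ext (natCast_zmod_inj (n := n) (by omega) (by omega) h2.symm))
      · intro h; rw [h]
    rw [if_congr hiff rfl rfl]
  rw [hone, Matrix.det_one] at hdet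
  norm_num at hdet

lemma fcov_full (s : ZMod n) :
    fcov k n s (vcol k n (s + ((k - 1 : ℕ) : ZMod n))) = Dl k n s := by
  rw [fcov, Dl]
  congr 1
  refine Matrix.ext fun a b => ?_
  simp only [Matrix.of_apply]
  split
  · rfl
  · rename_i hb
    have hbv : (b : ℕ) = k - 1 := by have := b.isLt; omega
    rw [vcol, hbv]

lemma fcov_rot (s : ZMod n) :
    fcov k n (s + 1) (vcol k n s) =
      (-1 : MvPolynomial (Fin k × ZMod n) ℂ) ^ ((k - 1) * 1) * Dl k n s := by
  haveI : NeZero k := ⟨by omega⟩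
  have hmat : (Matrix.of fun a b : Fin k =>
      if (b : ℕ) < k - 1 then genericM k n a (s + 1 + ((b : ℕ) : ZMod n)) else vcol k n s a) =
      Matrix.of fun a b : Fin k =>
        (Matrix.of fun a' b' : Fin k => genericM k n a' (s + ((b' : ℕ) : ZMod n))) a
          (b + ((1 : ℕ) : Fin k)) := by
    refine Matrix.ext fun a b => ?_
    have hval : Fin.val (b + ((1 : ℕ) : Fin k)) = ((b : ℕ) + 1) % k := by
      rw [Fin.val_add, Fin.val_natCast]
      conv_rhs => rw [Nat.add_mod]
      rw [Nat.mod_eq_of_lt b.isLt]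
    simp only [Matrix.of_apply]
    split
    · rename_i hb
      have h2 : Fin.val (b + ((1 : ℕ) : Fin k)) = (b : ℕ) + 1 := by
        rw [hval, Nat.mod_eq_of_lt (by omega)]
      rw [h2]
      have h3 : s + 1 + ((b : ℕ) : ZMod n) = s + (((b : ℕ) + 1 : ℕ) : ZMod n) := by
        push_cast; ring
      rw [h3]
    · rename_i hb
      have hbv : (b : ℕ) = k - 1 := by have := b.isLt; omega
      have h2 : Fin.val (b + ((1 : ℕ) : Fin k)) = 0 := by
        rw [hval, hbv]
        have : k - 1 + 1 = k := by omega
        rw [this, Nat.mod_self]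
      rw [h2]
      simp [vcol]
  rw [fcov, hmat, det_colperm, Fin.val_natCast, Nat.mod_eq_of_lt (by omega), ← Dl]

lemma N_mul_apply (r : ZMod n) (g : Fin k → ZMod n) (i j : Fin k) :
    ((Matrix.of fun i l : Fin k => fcov k n (r + ((i : ℕ) : ZMod n)) (ebasis k n l)) *
      (Matrix.of fun l j : Fin k => genericM k n l (g j))) i j
    = fcov k n (r + ((i : ℕ) : ZMod n)) (vcol k n (g j)) := by
  rw [Matrix.mul_apply, fcov_linear hk hkn]
  refine Finset.sum_congr rfl fun l _ => ?_
  simp only [Matrix.of_apply, vcol]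
  ring

lemma sub_val_of_le {a b : ℕ} (hba : b ≤ a) (han : a < n) (r : ZMod n) :
    ((r + ((a : ℕ) : ZMod n)) - (r + ((b : ℕ) : ZMod n))).val = a - b := by
  haveI : NeZero n := ⟨by omega⟩
  have h1 : (r + ((a : ℕ) : ZMod n)) - (r + ((b : ℕ) : ZMod n)) = (((a - b : ℕ)) : ZMod n) := by
    push_cast [Nat.cast_sub hba]
    ring
  rw [h1, ZMod.val_natCast, Nat.mod_eq_of_lt (by omega)]

lemma detN (r : ZMod n) :
    Matrix.det (Matrix.of fun i l : Fin k =>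
        fcov k n (r + ((i : ℕ) : ZMod n)) (ebasis k n l)) =
      ∏ i ∈ Finset.range (k - 1), Dl k n (r + ((i : ℕ) : ZMod n)) := by
  haveI : NeZero n := ⟨by omega⟩
  haveI : NeZero k := ⟨by omega⟩
  set N := Matrix.of fun i l : Fin k => fcov k n (r + ((i : ℕ) : ZMod n)) (ebasis k n l) with hN
  set V := Matrix.of fun l j : Fin k => genericM k n l (r + ((j : ℕ) : ZMod n)) with hV
  have hVDl : V.det = Dl k n r := rfl
  have hT : ∀ i j : Fin k, (N * V) i j =
      fcov k n (r + ((i : ℕ) : ZMod n)) (vcol k n (r + ((j : ℕ) : ZMod n))) := by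
    intro i j
    exact N_mul_apply hk hkn r _ i j
  have hcolperm := det_colperm (N * V) (((k - 1 : ℕ)) : Fin k)
  have heval : ((((k - 1 : ℕ)) : Fin k) : ℕ) = k - 1 := by
    rw [Fin.val_natCast, Nat.mod_eq_of_lt (by omega)]
  rw [heval] at hcolperm
  -- the rotated matrix is lower triangular
  have hlow : Matrix.BlockTriangular
      (Matrix.of fun i j : Fin k => (N * V) i (j + (((k - 1 : ℕ)) : Fin k))) OrderDual.toDual := by
    intro i j hij
    have hij' : i < j := hij
    have hj1 : 1 ≤ (j : ℕ) := by
      have : (i : ℕ) < (j : ℕ) := hij'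
      omega
    have hjval : Fin.val (j + (((k - 1 : ℕ)) : Fin k)) = (j : ℕ) - 1 := by
      rw [Fin.val_add, heval]
      have hjk := j.isLt
      have h2 := mod_two_range (a := (j : ℕ) + (k - 1)) (n := k) (by omega) (by omega)
      rw [h2, if_pos (by omega)]
      omega
    simp only [Matrix.of_apply]
    rw [hT, hjval]
    apply fcov_zero_of_mem hk hkn
    have hij2 : (i : ℕ) < (j : ℕ) := hij'
    have hjk := j.isLt
    rw [sub_val_of_le hk hkn (a := (j : ℕ) - 1) (b := (i : ℕ)) (by omega) (by omega) r]
    omega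
  have hdiag := Matrix.det_of_lowerTriangular _ hlow
  -- compute diagonal product
  obtain ⟨K', hK'⟩ : ∃ K', k = K' + 1 := ⟨k - 1, by omega⟩
  have hprod : ∏ i : Fin k, (Matrix.of fun i j : Fin k =>
      (N * V) i (j + (((k - 1 : ℕ)) : Fin k))) i i =
      Dl k n r * ((-1 : MvPolynomial (Fin k × ZMod n) ℂ) ^ ((k - 1) * 1)) ^ (k - 1) *
        ∏ i ∈ Finset.range (k - 1), Dl k n (r + ((i : ℕ) : ZMod n)) := by
    subst hK'
    rw [Fin.prod_univ_succ]
    have h00 : (Matrix.of fun i j : Fin (K' + 1) =>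
        (N * V) i (j + (((K' + 1 - 1 : ℕ)) : Fin (K' + 1)))) 0 0 = Dl (K' + 1) n r := by
      simp only [Matrix.of_apply]
      rw [hT]
      have h1 : Fin.val ((0 : Fin (K' + 1)) + (((K' + 1 - 1 : ℕ)) : Fin (K' + 1))) = K' := by
        rw [Fin.val_add]
        simp only [Fin.val_zero, Nat.zero_add, Fin.val_natCast, Nat.add_sub_cancel]
        rw [Nat.mod_eq_of_lt (Nat.lt_succ_self K'), Nat.mod_eq_of_lt (Nat.lt_succ_self K')]
      rw [h1]
      simp only [Fin.val_zero, Nat.cast_zero, add_zero]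
      have hfull := fcov_full hk hkn (n := n) (k := K' + 1) r
      have h4 : ((K' + 1 - 1 : ℕ) : ZMod n) = ((K' : ℕ) : ZMod n) := by norm_num
      rw [h4] at hfull
      exact hfull
    rw [h00]
    have hsucc : ∀ i : Fin K', (Matrix.of fun i j : Fin (K' + 1) =>
        (N * V) i (j + (((K' + 1 - 1 : ℕ)) : Fin (K' + 1)))) i.succ i.succ =
        ((-1 : MvPolynomial (Fin (K' + 1) × ZMod n) ℂ) ^ ((K' + 1 - 1) * 1)) *
          Dl (K' + 1) n (r + ((i : ℕ) : ZMod n)) := by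
      intro i
      simp only [Matrix.of_apply]
      rw [hT]
      have h1 : Fin.val (i.succ + (((K' + 1 - 1 : ℕ)) : Fin (K' + 1))) = (i : ℕ) := by
        rw [Fin.val_add, Fin.val_succ, Fin.val_natCast]
        rw [Nat.mod_eq_of_lt (show K' + 1 - 1 < K' + 1 by omega)]
        have h2 := mod_two_range (a := (i : ℕ) + 1 + (K' + 1 - 1)) (n := K' + 1)
          (by omega) (by have := i.isLt; omega)
        rw [h2, if_pos (by omega)]
        omega
      rw [h1]
      have h2 : r + (((i : ℕ) + 1 : ℕ) : ZMod n) = (r + ((i : ℕ) : ZMod n)) + 1 := by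
        push_cast; ring
      have h3 : ((i.succ : ℕ) : ZMod n) = (((i : ℕ) + 1 : ℕ) : ZMod n) := by
        rw [Fin.val_succ]
      rw [h3, h2]
      exact fcov_rot hk hkn (r + ((i : ℕ) : ZMod n))
    rw [Finset.prod_congr rfl (fun i _ => hsucc i)]
    rw [Finset.prod_mul_distrib, Finset.prod_const, Finset.card_univ, Fintype.card_fin]
    rw [Fin.prod_univ_eq_prod_range (fun i => Dl (K' + 1) n (r + ((i : ℕ) : ZMod n))) K']
    have : K' + 1 - 1 = K' := by omega
    rw [this]
    ring
  rw [hprod] at hdiag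
  rw [hdiag] at hcolperm
  -- hcolperm : Dl r * σ^.. * ∏ = (-1)^((k-1)*(k-1)) * det (N*V)
  have hNV : (N * V).det = N.det * Dl k n r := by
    rw [Matrix.det_mul, hVDl]
  rw [hNV] at hcolperm
  have hsig : ((-1 : MvPolynomial (Fin k × ZMod n) ℂ) ^ ((k - 1) * 1)) ^ (k - 1) =
      (-1 : MvPolynomial (Fin k × ZMod n) ℂ) ^ ((k - 1) * (k - 1)) := by
    rw [← pow_mul, mul_one]
  rw [hsig] at hcolperm
  -- multiply both sides by the sign
  have hss : (-1 : MvPolynomial (Fin k × ZMod n) ℂ) ^ ((k - 1) * (k - 1)) *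
      (-1 : MvPolynomial (Fin k × ZMod n) ℂ) ^ ((k - 1) * (k - 1)) = 1 := sig_mul_self _ _
  have hmain : Dl k n r * ∏ i ∈ Finset.range (k - 1), Dl k n (r + ((i : ℕ) : ZMod n)) =
      N.det * Dl k n r := by
    have h5 := congrArg (fun z => (-1 : MvPolynomial (Fin k × ZMod n) ℂ) ^ ((k - 1) * (k - 1)) * z)
      hcolperm
    calc Dl k n r * ∏ i ∈ Finset.range (k - 1), Dl k n (r + ((i : ℕ) : ZMod n))
        = ((-1 : MvPolynomial (Fin k × ZMod n) ℂ) ^ ((k - 1) * (k - 1)) *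
            (-1 : MvPolynomial (Fin k × ZMod n) ℂ) ^ ((k - 1) * (k - 1))) *
            (Dl k n r * ∏ i ∈ Finset.range (k - 1), Dl k n (r + ((i : ℕ) : ZMod n))) := by
          rw [hss, one_mul]
      _ = (-1 : MvPolynomial (Fin k × ZMod n) ℂ) ^ ((k - 1) * (k - 1)) *
            (Dl k n r * (-1 : MvPolynomial (Fin k × ZMod n) ℂ) ^ ((k - 1) * (k - 1)) *
              ∏ i ∈ Finset.range (k - 1), Dl k n (r + ((i : ℕ) : ZMod n))) := by ring
      _ = (-1 : MvPolynomial (Fin k × ZMod n) ℂ) ^ ((k - 1) * (k - 1)) *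
            ((-1 : MvPolynomial (Fin k × ZMod n) ℂ) ^ ((k - 1) * (k - 1)) *
              (N.det * Dl k n r)) := h5
      _ = ((-1 : MvPolynomial (Fin k × ZMod n) ℂ) ^ ((k - 1) * (k - 1)) *
            (-1 : MvPolynomial (Fin k × ZMod n) ℂ) ^ ((k - 1) * (k - 1))) *
            (N.det * Dl k n r) := by ring
      _ = N.det * Dl k n r := by rw [hss, one_mul]
  have hmain2 : (∏ i ∈ Finset.range (k - 1), Dl k n (r + ((i : ℕ) : ZMod n))) * Dl k n r =
      N.det * Dl k n r := by
    rw [← hmain]; ring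
  exact (mul_right_cancel₀ (Dl_ne_zero hk hkn r) hmain2).symm

end Grass2
section Entry

variable {k n : ℕ} (hk : 2 ≤ k) (hkn : 2 * k ≤ n)
include hk hkn

lemma chi_parity {c D iv : ℕ} (hc : c < n) (hiv : iv ≤ k) (hivD : iv ≤ D)
    (hD : D ≤ n + k - 2) (hnc : k - 1 ≤ (D - iv) % n) :
    ((if (c + D) % n < (c + iv) % n then 1 else 0) : ℕ) % 2 =
      (((if n ≤ c + iv then 1 else 0) + ((if n ≤ c + D then 1 else 0) +
        (if 2 * n ≤ c + D then 1 else 0))) : ℕ) % 2 := by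
  have h1 := mod_three_range (a := c + D) (n := n) (by omega) (by omega)
  have h2 := mod_two_range (a := c + iv) (n := n) (by omega) (by omega)
  have h3 := mod_two_range (a := D - iv) (n := n) (by omega) (by omega)
  split_ifs at h1 h2 h3 ⊢ <;> omega

lemma entry_eq (r : ZMod n) (t iv jv : ℕ) (hiv : iv ≤ k) (hivD : iv ≤ k - 1 + t + jv)
    (hD : k - 1 + t + jv ≤ n + k - 2) :
    pluck (genericM k n) (cSeg n (r + ((iv : ℕ) : ZMod n)) (k - 1) ∪
        {r + (((k - 1 + t + jv : ℕ)) : ZMod n)}) =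
      (-1 : MvPolynomial (Fin k × ZMod n) ℂ) ^
          ((k - 1) * (((k - 1) - (n - ((r - 1).val + iv) % n)) +
            (if n ≤ (r - 1).val + iv then 1 else 0))) *
        ((-1 : MvPolynomial (Fin k × ZMod n) ℂ) ^
          ((k - 1) * ((if n ≤ (r - 1).val + (k - 1 + t + jv) then 1 else 0) +
            (if 2 * n ≤ (r - 1).val + (k - 1 + t + jv) then 1 else 0))) *
        fcov k n (r + ((iv : ℕ) : ZMod n)) (vcol k n (r + (((k - 1 + t + jv : ℕ)) : ZMod n)))) := by
  haveI : NeZero n := ⟨by omega⟩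
  set c := (r - 1).val with hc_def
  have hc : c < n := ZMod.val_lt _
  set D := k - 1 + t + jv with hD_def
  set s := r + ((iv : ℕ) : ZMod n) with hs_def
  set m' := r + ((D : ℕ) : ZMod n) with hm_def
  have hsval : (s - 1).val = (c + iv) % n := val_shift r iv
  have hδ : (m' - s).val = (D - iv) % n := by
    have h1 : m' - s = (((D - iv : ℕ)) : ZMod n) := by
      rw [hm_def, hs_def]
      push_cast [Nat.cast_sub hivD]
      ring
    rw [h1, ZMod.val_natCast]
  by_cases hcol : (m' - s).val < k - 1
  · -- collision: both sides are zero
    have hmem : m' ∈ cSeg n s (k - 1) := (mem_cSeg (by omega)).mpr hcol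
    have hunion : cSeg n s (k - 1) ∪ {m'} = cSeg n s (k - 1) :=
      Finset.union_eq_left.mpr (Finset.singleton_subset_iff.mpr hmem)
    rw [hunion, pluck, dif_neg, fcov_zero_of_mem hk hkn hcol]
    · ring
    · rintro ⟨h1, h2⟩
      rw [cSeg_card (by omega)] at h2
      omega
  · -- noncollision
    push_neg at hcol
    set f : Fin k → ZMod n := fun b =>
      if (b : ℕ) < k - 1 then s + ((b : ℕ) : ZMod n) else m' with hf
    have hfval : ∀ b : Fin k, (f b - s).val =
        if (b : ℕ) < k - 1 then (b : ℕ) else (m' - s).val := by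
      intro b
      simp only [hf]
      split
      · have h1 : s + ((b : ℕ) : ZMod n) - s = ((b : ℕ) : ZMod n) := by ring
        rw [h1, ZMod.val_natCast, Nat.mod_eq_of_lt (by have := b.isLt; omega)]
      · rfl
    have hmono : StrictMono fun b : Fin k => (f b - s).val := by
      intro b1 b2 hb
      have hb12 : (b1 : ℕ) < (b2 : ℕ) := hb
      have h1 := b1.isLt
      have h2 := b2.isLt
      simp only [hfval]
      split <;> split <;> omega
    have himg : Finset.image f Finset.univ = cSeg n s (k - 1) ∪ {m'} := by
      ext y
      simp only [Finset.mem_image, Finset.mem_univ, true_and, Finset.mem_union,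
        Finset.mem_singleton, mem_cSeg (show k - 1 ≤ n by omega)]
      constructor
      · rintro ⟨b, rfl⟩
        simp only [hf]
        split
        · left
          have h1 : s + ((b : ℕ) : ZMod n) - s = ((b : ℕ) : ZMod n) := by ring
          rw [h1, ZMod.val_natCast, Nat.mod_eq_of_lt (by have := b.isLt; omega)]
          assumption
        · right; rfl
      · rintro (hy | rfl)
        · refine ⟨⟨(y - s).val, by have := ZMod.val_lt (y - s); omega⟩, ?_⟩
          simp only [hf]
          rw [if_pos (by simpa using hy)]
          rw [ZMod.natCast_val, ZMod.cast_id]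
          ring
        · refine ⟨⟨k - 1, by omega⟩, ?_⟩
          simp only [hf]
          rw [if_neg (by omega)]
    have hcyc := pluck_cyclic (show 0 < k by omega) (genericM k n) s f hmono
    rw [← himg, hcyc]
    -- compute the filter cardinality
    obtain ⟨K', hK'⟩ : ∃ K', k = K' + 1 := ⟨k - 1, by omega⟩
    have hd : (Finset.univ.filter fun b : Fin k => rep n (f b) < rep n s).card =
        ((k - 1) - (n - (c + iv) % n)) + (if rep n m' < rep n s then 1 else 0) := by
      subst hK'
      rw [Finset.card_filter, Fin.sum_univ_castSucc]
      have hlast : f (Fin.last K') = m' := by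
        simp only [hf]
        simp only [Fin.val_last]
        rw [if_neg (by omega)]
      rw [hlast]
      congr 1
      have hcs : ∀ b : Fin K', f b.castSucc = s + ((b : ℕ) : ZMod n) := by
        intro b
        simp only [hf]
        simp only [Fin.coe_castSucc]
        rw [if_pos (by have := b.isLt; omega)]
      have hterm : ∀ b : Fin K',
          (if rep n (f b.castSucc) < rep n s then (1 : ℕ) else 0) =
          (if n ≤ (c + iv) % n + (b : ℕ) then (1 : ℕ) else 0) := by
        intro b
        rw [hcs b]
        congr 1
        rw [eq_iff_iff]
        rw [rep_shift_lt s (b : ℕ) (by have := b.isLt; omega), hsval]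
      rw [Finset.sum_congr rfl (fun b _ => hterm b)]
      rw [Fin.sum_univ_eq_sum_range (fun b => if n ≤ (c + iv) % n + b then (1 : ℕ) else 0) K']
      rw [← Finset.card_filter, count_range]
      simp only [Nat.add_sub_cancel]
    rw [hd]
    have hdet : (Matrix.of fun i b : Fin k => genericM k n i (f b)) =
        Matrix.of fun a b : Fin k =>
          if (b : ℕ) < k - 1 then genericM k n a (s + ((b : ℕ) : ZMod n)) else
            vcol k n m' a := by
      refine Matrix.ext fun a b => ?_
      simp only [Matrix.of_apply, hf]
      split <;> rfl
    rw [hdet, ← fcov]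
    rw [← mul_assoc, ← pow_add, ← Nat.mul_add]
    congr 1
    rw [pow_mul, pow_mul]
    apply sig_pow_congr
    intro hk2
    -- parity of chi
    have hrepm : rep n m' = (c + D) % n + 1 := by
      rw [hm_def, rep_eq, val_shift]
    have hreps2 : rep n s = (c + iv) % n + 1 := by
      rw [rep_eq, hsval]
    have hchi : (if rep n m' < rep n s then (1 : ℕ) else 0) =
        (if (c + D) % n < (c + iv) % n then (1 : ℕ) else 0) := by
      rw [hrepm, hreps2]
      congr 1
      rw [eq_iff_iff]
      omega
    have hpar := chi_parity hk hkn (c := c) (D := D) (iv := iv) hc hiv hivD hD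
      (by rw [← hδ]; exact hcol)
    rw [hchi]
    omega

end Entry
section Core

variable {k n : ℕ} (hk : 2 ≤ k) (hkn : 2 * k ≤ n)
include hk hkn

lemma row_parity {c i : ℕ} (hc : c < n) (hi : i ≤ k - 2) :
    k % 2 = 0 →
    (k - (n - (c + i) % n)) % 2 =
      (((k - 1) - (n - (c + (i + 1)) % n) + (if n ≤ c + (i + 1) then 1 else 0)) +
        (if n ≤ c + i then 1 else 0)) % 2 := by
  intro hk2
  have h1 := mod_two_range (a := c + i) (n := n) (by omega) (by omega)
  have h2 := mod_two_range (a := c + (i + 1)) (n := n) (by omega) (by omega)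
  split_ifs at h1 h2 ⊢ <;> omega

lemma col_parity {c x0 : ℕ} (hc : c < n) (hx0a : k - 1 ≤ x0) (hx0b : x0 ≤ 2 * n - 2) :
    k % 2 = 0 →
    ((k - (n - x0)) + (k - (2 * n - x0)) + (k - (n - x0 % n))) % 2 = 0 := by
  intro hk2
  have h1 := mod_two_range (a := x0) (n := n) (by omega) (by omega)
  split_ifs at h1 <;> omega

lemma sigE_congr {a b : ℕ} (h : k % 2 = 0 → a % 2 = b % 2) :
    (-1 : MvPolynomial (Fin k × ZMod n) ℂ) ^ ((k - 1) * a) =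
      (-1 : MvPolynomial (Fin k × ZMod n) ℂ) ^ ((k - 1) * b) := by
  rw [pow_mul, pow_mul]
  exact sig_pow_congr h

lemma core_aux (r : ZMod n) (t : ℕ) {K : ℕ} (hiK : ∀ i : Fin K, (i : ℕ) ≤ k)
    (hti : ∀ i : Fin K, (i : ℕ) ≤ k - 1 + t) (htj : ∀ j : Fin K, t + (j : ℕ) ≤ n - 1) :
    (Matrix.of fun i j : Fin K =>
      pluck (genericM k n) (cSeg n (r + ((i : ℕ) : ZMod n)) (k - 1) ∪
        {r + (((k - 1 + t + (j : ℕ) : ℕ)) : ZMod n)})) =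
    Matrix.diagonal (fun i : Fin K => (-1 : MvPolynomial (Fin k × ZMod n) ℂ) ^
        ((k - 1) * (((k - 1) - (n - ((r - 1).val + (i : ℕ)) % n)) +
          (if n ≤ (r - 1).val + (i : ℕ) then 1 else 0)))) *
      (Matrix.of fun i j : Fin K =>
        fcov k n (r + ((i : ℕ) : ZMod n))
          (vcol k n (r + (((k - 1 + t + (j : ℕ) : ℕ)) : ZMod n)))) *
      Matrix.diagonal (fun j : Fin K => (-1 : MvPolynomial (Fin k × ZMod n) ℂ) ^
        ((k - 1) * ((if n ≤ (r - 1).val + (k - 1 + t + (j : ℕ)) then 1 else 0) +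
          (if 2 * n ≤ (r - 1).val + (k - 1 + t + (j : ℕ)) then 1 else 0)))) := by
  refine Matrix.ext fun i j => ?_
  rw [Matrix.mul_diagonal, Matrix.diagonal_mul]
  simp only [Matrix.of_apply]
  have hjk := htj j
  rw [entry_eq hk hkn r t (i : ℕ) (j : ℕ) (hiK i) (by have := hti i; omega) (by omega)]
  ring

end Core
section CoreII

variable {k n : ℕ} (hk : 2 ≤ k) (hkn : 2 * k ≤ n)
include hk hkn

lemma core_ii (r : ZMod n) (t : ℕ) (ht1 : 1 ≤ t) (ht2 : t ≤ n - k - 1) :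
    Matrix.det (Matrix.of fun i j : Fin (k + 1) =>
      pluck (genericM k n) (cSeg n (r + ((i : ℕ) : ZMod n)) (k - 1) ∪
        {r + (((k - 1 + t + (j : ℕ) : ℕ)) : ZMod n)})) = 0 := by
  haveI : NeZero n := ⟨by omega⟩
  rw [core_aux hk hkn r t (fun i => by have := i.isLt; omega)
    (fun i => by have := i.isLt; omega) (fun j => by have := j.isLt; omega)]
  rw [Matrix.det_mul, Matrix.det_mul]
  have hfac : (Matrix.of fun i j : Fin (k + 1) =>
      fcov k n (r + ((i : ℕ) : ZMod n))
        (vcol k n (r + (((k - 1 + t + (j : ℕ) : ℕ)) : ZMod n)))) =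
      (Matrix.of fun (i : Fin (k + 1)) (l : Fin (k + 1)) =>
        if h : (l : ℕ) < k then
          fcov k n (r + ((i : ℕ) : ZMod n)) (ebasis k n ⟨(l : ℕ), h⟩) else 0) *
      (Matrix.of fun (l : Fin (k + 1)) (j : Fin (k + 1)) =>
        if h : (l : ℕ) < k then
          genericM k n ⟨(l : ℕ), h⟩ (r + (((k - 1 + t + (j : ℕ) : ℕ)) : ZMod n)) else 0) := by
    refine Matrix.ext fun i j => ?_
    rw [Matrix.mul_apply]
    simp only [Matrix.of_apply]
    rw [Fin.sum_univ_castSucc]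
    have hlast : (if h : ((Fin.last k : Fin (k + 1)) : ℕ) < k then
        fcov k n (r + ((i : ℕ) : ZMod n)) (ebasis k n ⟨((Fin.last k : Fin (k + 1)) : ℕ), h⟩)
        else 0) *
        (if h : ((Fin.last k : Fin (k + 1)) : ℕ) < k then
          genericM k n ⟨((Fin.last k : Fin (k + 1)) : ℕ), h⟩
            (r + (((k - 1 + t + (j : ℕ) : ℕ)) : ZMod n)) else 0) = 0 := by
      rw [dif_neg (by simp)]
      exact zero_mul _
    rw [hlast, add_zero]
    rw [fcov_linear hk hkn]
    refine Finset.sum_congr rfl fun l _ => ?_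
    have hlt : ((l.castSucc : Fin (k + 1)) : ℕ) < k := by
      simp only [Fin.coe_castSucc]
      exact l.isLt
    rw [dif_pos hlt, dif_pos hlt]
    have heta : (⟨((l.castSucc : Fin (k + 1)) : ℕ), hlt⟩ : Fin k) = l :=
      Fin.ext (by simp)
    rw [heta]
    simp only [vcol]
    ring
  rw [hfac, Matrix.det_mul]
  have hzero : (Matrix.of fun (i : Fin (k + 1)) (l : Fin (k + 1)) =>
      if h : (l : ℕ) < k then
        fcov k n (r + ((i : ℕ) : ZMod n)) (ebasis k n ⟨(l : ℕ), h⟩) else 0).det = 0 := by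
    apply Matrix.det_eq_zero_of_column_eq_zero (Fin.last k)
    intro i
    simp only [Matrix.of_apply]
    rw [dif_neg (by simp)]
  rw [hzero, zero_mul, mul_zero, zero_mul]

end CoreII
section CoreI

variable {k n : ℕ} (hk : 2 ≤ k) (hkn : 2 * k ≤ n)
include hk hkn

lemma core_i (r : ZMod n) (t : ℕ) (ht : t ≤ n - k) :
    Matrix.det (Matrix.of fun i j : Fin k =>
      pluck (genericM k n) (cSeg n (r + ((i : ℕ) : ZMod n)) (k - 1) ∪
        {r + (((k - 1 + t + (j : ℕ) : ℕ)) : ZMod n)})) =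
    (∏ i ∈ Finset.range (k - 1),
        pluck (genericM k n) (cSeg n (r + ((i : ℕ) : ZMod n)) k)) *
      pluck (genericM k n) (cSeg n (r + (((k - 1 + t : ℕ)) : ZMod n)) k) := by
  haveI : NeZero n := ⟨by omega⟩
  have hc : (r - 1).val < n := ZMod.val_lt _
  rw [core_aux hk hkn r t (fun i => by have := i.isLt; omega)
    (fun i => by have := i.isLt; omega) (fun j => by have := j.isLt; omega)]
  have hNW : (Matrix.of fun i j : Fin k =>
      fcov k n (r + ((i : ℕ) : ZMod n))
        (vcol k n (r + (((k - 1 + t + (j : ℕ) : ℕ)) : ZMod n)))) =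
      (Matrix.of fun i l : Fin k => fcov k n (r + ((i : ℕ) : ZMod n)) (ebasis k n l)) *
      (Matrix.of fun l j : Fin k =>
        genericM k n l (r + (((k - 1 + t + (j : ℕ) : ℕ)) : ZMod n))) := by
    refine Matrix.ext fun i j => ?_
    rw [N_mul_apply hk hkn r (fun j : Fin k =>
      r + (((k - 1 + t + (j : ℕ) : ℕ)) : ZMod n)) i j]
    rfl
  rw [hNW]
  rw [Matrix.det_mul, Matrix.det_mul, Matrix.det_mul, Matrix.det_diagonal,
    Matrix.det_diagonal, detN hk hkn r]
  have hdetW : (Matrix.of fun l j : Fin k =>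
      genericM k n l (r + (((k - 1 + t + (j : ℕ) : ℕ)) : ZMod n))).det =
      Dl k n (r + (((k - 1 + t : ℕ)) : ZMod n)) := by
    rw [Dl]
    congr 1
    refine Matrix.ext fun l j => ?_
    simp only [Matrix.of_apply]
    congr 1
    push_cast
    ring
  rw [hdetW]
  have hProd : ∏ i ∈ Finset.range (k - 1), Dl k n (r + ((i : ℕ) : ZMod n)) =
      (∏ i ∈ Finset.range (k - 1), (-1 : MvPolynomial (Fin k × ZMod n) ℂ) ^
          ((k - 1) * (k - (n - ((r - 1).val + i) % n)))) *
        ∏ i ∈ Finset.range (k - 1),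
          pluck (genericM k n) (cSeg n (r + ((i : ℕ) : ZMod n)) k) := by
    rw [← Finset.prod_mul_distrib]
    refine Finset.prod_congr rfl fun i _ => ?_
    rw [Dl_eq_sig_pluck hk hkn, val_shift]
  have hDlm : Dl k n (r + (((k - 1 + t : ℕ)) : ZMod n)) =
      (-1 : MvPolynomial (Fin k × ZMod n) ℂ) ^
          ((k - 1) * (k - (n - ((r - 1).val + (k - 1 + t)) % n))) *
        pluck (genericM k n) (cSeg n (r + (((k - 1 + t : ℕ)) : ZMod n)) k) := by
    rw [Dl_eq_sig_pluck hk hkn, val_shift]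
  rw [hProd, hDlm]
  rw [Fin.prod_univ_eq_prod_range (fun i : ℕ => (-1 : MvPolynomial (Fin k × ZMod n) ℂ) ^
        ((k - 1) * (((k - 1) - (n - ((r - 1).val + i) % n)) +
          (if n ≤ (r - 1).val + i then 1 else 0)))) k]
  rw [Fin.prod_univ_eq_prod_range (fun j : ℕ => (-1 : MvPolynomial (Fin k × ZMod n) ℂ) ^
        ((k - 1) * ((if n ≤ (r - 1).val + (k - 1 + t + j) then 1 else 0) +
          (if 2 * n ≤ (r - 1).val + (k - 1 + t + j) then 1 else 0)))) k]
  -- now pure sign algebra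
  set P1 := ∏ i ∈ Finset.range (k - 1),
    pluck (genericM k n) (cSeg n (r + ((i : ℕ) : ZMod n)) k) with hP1
  set P2 := pluck (genericM k n) (cSeg n (r + (((k - 1 + t : ℕ)) : ZMod n)) k) with hP2
  set A1 := ∏ i ∈ Finset.range k, (-1 : MvPolynomial (Fin k × ZMod n) ℂ) ^
      ((k - 1) * (((k - 1) - (n - ((r - 1).val + i) % n)) +
        (if n ≤ (r - 1).val + i then 1 else 0))) with hA1
  set A2 := ∏ i ∈ Finset.range (k - 1), (-1 : MvPolynomial (Fin k × ZMod n) ℂ) ^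
      ((k - 1) * (k - (n - ((r - 1).val + i) % n))) with hA2
  set A3 := (-1 : MvPolynomial (Fin k × ZMod n) ℂ) ^
      ((k - 1) * (k - (n - ((r - 1).val + (k - 1 + t)) % n))) with hA3
  set A4 := ∏ j ∈ Finset.range k, (-1 : MvPolynomial (Fin k × ZMod n) ℂ) ^
      ((k - 1) * ((if n ≤ (r - 1).val + (k - 1 + t + j) then 1 else 0) +
        (if 2 * n ≤ (r - 1).val + (k - 1 + t + j) then 1 else 0))) with hA4
  have hA12 : A1 * A2 = 1 := by
    obtain ⟨K', hK'⟩ : ∃ K', k = K' + 1 := ⟨k - 1, by omega⟩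
    have hsplit : A1 = (∏ i ∈ Finset.range (k - 1),
        (-1 : MvPolynomial (Fin k × ZMod n) ℂ) ^
          ((k - 1) * (((k - 1) - (n - ((r - 1).val + (i + 1)) % n)) +
            (if n ≤ (r - 1).val + (i + 1) then 1 else 0)))) *
        (-1 : MvPolynomial (Fin k × ZMod n) ℂ) ^
          ((k - 1) * (((k - 1) - (n - ((r - 1).val + 0) % n)) +
            (if n ≤ (r - 1).val + 0 then 1 else 0))) := by
      rw [hA1]
      rw [show Finset.range k = Finset.range ((k - 1) + 1) from by
        rw [Nat.sub_add_cancel (by omega)]]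
      rw [Finset.prod_range_succ']
    have hA2split : A2 = (∏ i ∈ Finset.range (k - 1),
        (-1 : MvPolynomial (Fin k × ZMod n) ℂ) ^
          ((k - 1) * (((k - 1) - (n - ((r - 1).val + (i + 1)) % n)) +
            (if n ≤ (r - 1).val + (i + 1) then 1 else 0)))) *
        (∏ i ∈ Finset.range (k - 1),
          (-1 : MvPolynomial (Fin k × ZMod n) ℂ) ^
            ((k - 1) * (if n ≤ (r - 1).val + i then 1 else 0))) := by
      rw [hA2, ← Finset.prod_mul_distrib]
      refine Finset.prod_congr rfl fun i hi => ?_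
      rw [← pow_add, ← Nat.mul_add]
      refine sigE_congr hk hkn ?_
      intro hk2
      have := row_parity hk hkn (c := (r - 1).val) (i := i) hc
        (by rw [Finset.mem_range] at hi; omega) hk2
      omega
    have hsq : (∏ i ∈ Finset.range (k - 1),
        (-1 : MvPolynomial (Fin k × ZMod n) ℂ) ^
          ((k - 1) * (((k - 1) - (n - ((r - 1).val + (i + 1)) % n)) +
            (if n ≤ (r - 1).val + (i + 1) then 1 else 0)))) *
        (∏ i ∈ Finset.range (k - 1),
        (-1 : MvPolynomial (Fin k × ZMod n) ℂ) ^
          ((k - 1) * (((k - 1) - (n - ((r - 1).val + (i + 1)) % n)) +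
            (if n ≤ (r - 1).val + (i + 1) then 1 else 0)))) = 1 := by
      rw [← Finset.prod_mul_distrib]
      rw [Finset.prod_congr rfl (fun i _ => sig_mul_self (k - 1) _)]
      exact Finset.prod_const_one
    have hq0 : ((k - 1) - (n - ((r - 1).val + 0) % n)) +
        (if n ≤ (r - 1).val + 0 then 1 else 0) = (k - 1) - (n - (r - 1).val) := by
      rw [Nat.add_zero, Nat.mod_eq_of_lt hc, if_neg (by omega)]
      omega
    have hAvsum : ∑ i ∈ Finset.range (k - 1), (if n ≤ (r - 1).val + i then 1 else 0) =
        (k - 1) - (n - (r - 1).val) := by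
      rw [← Finset.card_filter, count_range]
    have hrest : ((-1 : MvPolynomial (Fin k × ZMod n) ℂ) ^
          ((k - 1) * (((k - 1) - (n - ((r - 1).val + 0) % n)) +
            (if n ≤ (r - 1).val + 0 then 1 else 0)))) *
        (∏ i ∈ Finset.range (k - 1),
          (-1 : MvPolynomial (Fin k × ZMod n) ℂ) ^
            ((k - 1) * (if n ≤ (r - 1).val + i then 1 else 0))) = 1 := by
      have hAv : (∏ i ∈ Finset.range (k - 1),
          (-1 : MvPolynomial (Fin k × ZMod n) ℂ) ^
            ((k - 1) * (if n ≤ (r - 1).val + i then 1 else 0))) =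
          (-1 : MvPolynomial (Fin k × ZMod n) ℂ) ^
            ((k - 1) * ((k - 1) - (n - (r - 1).val))) := by
        have h1 : ∀ i, ((-1 : MvPolynomial (Fin k × ZMod n) ℂ)) ^
            ((k - 1) * (if n ≤ (r - 1).val + i then 1 else 0)) =
            ((-1 : MvPolynomial (Fin k × ZMod n) ℂ) ^ (k - 1)) ^
              (if n ≤ (r - 1).val + i then 1 else 0) := fun i => by rw [pow_mul]
        rw [Finset.prod_congr rfl (fun i _ => h1 i), Finset.prod_pow_eq_pow_sum, hAvsum,
          ← pow_mul]
      rw [hAv, hq0, sig_mul_self]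
    calc A1 * A2 = ((∏ i ∈ Finset.range (k - 1),
          (-1 : MvPolynomial (Fin k × ZMod n) ℂ) ^
            ((k - 1) * (((k - 1) - (n - ((r - 1).val + (i + 1)) % n)) +
              (if n ≤ (r - 1).val + (i + 1) then 1 else 0)))) *
          (∏ i ∈ Finset.range (k - 1),
          (-1 : MvPolynomial (Fin k × ZMod n) ℂ) ^
            ((k - 1) * (((k - 1) - (n - ((r - 1).val + (i + 1)) % n)) +
              (if n ≤ (r - 1).val + (i + 1) then 1 else 0))))) *
          (((-1 : MvPolynomial (Fin k × ZMod n) ℂ) ^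
            ((k - 1) * (((k - 1) - (n - ((r - 1).val + 0) % n)) +
              (if n ≤ (r - 1).val + 0 then 1 else 0)))) *
          (∏ i ∈ Finset.range (k - 1),
            (-1 : MvPolynomial (Fin k × ZMod n) ℂ) ^
              ((k - 1) * (if n ≤ (r - 1).val + i then 1 else 0)))) := by
          rw [hsplit, hA2split]; ring
      _ = 1 := by rw [hsq, hrest, one_mul]
  have hA34 : A4 * A3 = 1 := by
    have hW : A4 = ((-1 : MvPolynomial (Fin k × ZMod n) ℂ) ^ (k - 1)) ^
        ((k - (n - ((r - 1).val + (k - 1 + t)))) +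
          (k - (2 * n - ((r - 1).val + (k - 1 + t))))) := by
      rw [hA4]
      have h1 : ∀ j, ((-1 : MvPolynomial (Fin k × ZMod n) ℂ)) ^
          ((k - 1) * ((if n ≤ (r - 1).val + (k - 1 + t + j) then 1 else 0) +
            (if 2 * n ≤ (r - 1).val + (k - 1 + t + j) then 1 else 0))) =
          ((-1 : MvPolynomial (Fin k × ZMod n) ℂ) ^ (k - 1)) ^
            ((if n ≤ ((r - 1).val + (k - 1 + t)) + j then 1 else 0) +
              (if 2 * n ≤ ((r - 1).val + (k - 1 + t)) + j then 1 else 0)) := by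
        intro j
        rw [pow_mul]
        congr 2
        · exact if_congr (by omega) rfl rfl
        · exact if_congr (by omega) rfl rfl
      rw [Finset.prod_congr rfl (fun j _ => h1 j), Finset.prod_pow_eq_pow_sum]
      congr 1
      rw [Finset.sum_add_distrib, ← Finset.card_filter, ← Finset.card_filter,
        count_range, count_range]
    have hA3' : A3 = ((-1 : MvPolynomial (Fin k × ZMod n) ℂ) ^ (k - 1)) ^
        (k - (n - ((r - 1).val + (k - 1 + t)) % n)) := by
      rw [hA3, pow_mul]
    rw [hW, hA3', ← pow_add]
    have hpar := col_parity hk hkn (c := (r - 1).val) (x0 := (r - 1).val + (k - 1 + t))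
      hc (by omega) (by omega)
    have hfin := sig_pow_congr (R := MvPolynomial (Fin k × ZMod n) ℂ) (k := k)
      (a := (k - (n - ((r - 1).val + (k - 1 + t))) +
        (k - (2 * n - ((r - 1).val + (k - 1 + t)))) +
        (k - (n - ((r - 1).val + (k - 1 + t)) % n)))) (b := 0)
      (fun hk2 => by have := hpar hk2; omega)
    rw [pow_zero] at hfin
    exact hfin
  calc A1 * (A2 * P1 * (A3 * P2)) * A4
      = (A1 * A2) * (A4 * A3) * (P1 * P2) := by ring
    _ = P1 * P2 := by rw [hA12, hA34]; ring

end CoreI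
set_option synthInstance.maxHeartbeats 1000000
set_option maxHeartbeats 1600000

section Final

variable {k n : ℕ}

lemma grP_val (I : Finset (ZMod n)) : ((grP k n I : grA k n) : MvPolynomial (Fin k × ZMod n) ℂ)
    = pluck (genericM k n) I := rfl

variable (hk : 2 ≤ k) (hkn : 2 * k ≤ n)
include hk hkn

lemma mk_grP_consec (s : ZMod n) :
    Ideal.Quotient.mk (grJ k n) (grP k n (cSeg n s k)) = 1 := by
  have hmem : grP k n (cSeg n s k) - 1 ∈ grJ k n := Ideal.subset_span ⟨s, rfl⟩
  have h := Ideal.Quotient.eq.mpr hmem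
  rwa [map_one] at h

lemma detX_eq (r : ZMod n) (t : ℕ) (ht : t ≤ n - k) :
    Matrix.det (Matrix.of fun i j : Fin k =>
      grP k n (cSeg n (r + ((i : ℕ) : ZMod n)) (k - 1) ∪
        {r + (((k - 1 + t + (j : ℕ) : ℕ)) : ZMod n)})) =
    (∏ i ∈ Finset.range (k - 1), grP k n (cSeg n (r + ((i : ℕ) : ZMod n)) k)) *
      grP k n (cSeg n (r + (((k - 1 + t : ℕ)) : ZMod n)) k) := by
  apply Subtype.ext
  have hmapdet := RingHom.map_det ((grA k n).val.toRingHom)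
    (Matrix.of fun i j : Fin k =>
      grP k n (cSeg n (r + ((i : ℕ) : ZMod n)) (k - 1) ∪
        {r + (((k - 1 + t + (j : ℕ) : ℕ)) : ZMod n)}))
  have hmat : ((grA k n).val.toRingHom.mapMatrix
      (Matrix.of fun i j : Fin k =>
        grP k n (cSeg n (r + ((i : ℕ) : ZMod n)) (k - 1) ∪
          {r + (((k - 1 + t + (j : ℕ) : ℕ)) : ZMod n)}))) =
      (Matrix.of fun i j : Fin k =>
        pluck (genericM k n) (cSeg n (r + ((i : ℕ) : ZMod n)) (k - 1) ∪
          {r + (((k - 1 + t + (j : ℕ) : ℕ)) : ZMod n)})) := by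
    refine Matrix.ext fun i j => ?_
    rfl
  have hLHS : ((Matrix.det (Matrix.of fun i j : Fin k =>
      grP k n (cSeg n (r + ((i : ℕ) : ZMod n)) (k - 1) ∪
        {r + (((k - 1 + t + (j : ℕ) : ℕ)) : ZMod n)})) : grA k n) :
      MvPolynomial (Fin k × ZMod n) ℂ) =
      Matrix.det (Matrix.of fun i j : Fin k =>
        pluck (genericM k n) (cSeg n (r + ((i : ℕ) : ZMod n)) (k - 1) ∪
          {r + (((k - 1 + t + (j : ℕ) : ℕ)) : ZMod n)})) := by
    rw [← hmat]
    exact hmapdet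
  rw [hLHS, core_i hk hkn r t ht]
  rw [MulMemClass.coe_mul, SubmonoidClass.coe_finset_prod]
  rfl

theorem statement_part1 (r : ZMod n) (m : ZMod n)
    (hm : m ∈ cIcc n (r + (k : ZMod n) - 1) (r - 1)) :
    Matrix.det (Matrix.of fun i j : Fin k =>
      Ideal.Quotient.mk (grJ k n)
        (grP k n (cSeg n (r + ((i : ℕ) : ZMod n)) (k - 1) ∪ {m + ((j : ℕ) : ZMod n)}))) = 1 := by
  haveI : NeZero n := ⟨by omega⟩
  -- unpack membership
  have hlen : ((r - 1) - (r + (k : ZMod n) - 1)).val = n - k := by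
    have h1 : (r - 1) - (r + (k : ZMod n) - 1) = (((n - k : ℕ)) : ZMod n) := by
      have h2 : (((n - k : ℕ)) : ZMod n) = ((n : ℕ) : ZMod n) - (k : ZMod n) := by
        push_cast [Nat.cast_sub (show k ≤ n by omega)]
        ring
      rw [h2, ZMod.natCast_self]
      ring
    rw [h1, ZMod.val_natCast, Nat.mod_eq_of_lt (by omega)]
  rw [cIcc, hlen] at hm
  rw [mem_cSeg (by omega)] at hm
  set t := (m - (r + (k : ZMod n) - 1)).val with htdef
  have ht : t ≤ n - k := by omega
  have hmval : m = r + (((k - 1 + t : ℕ)) : ZMod n) := by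
    have h1 : m = (r + (k : ZMod n) - 1) + ((t : ℕ) : ZMod n) := by
      rw [htdef, ZMod.natCast_val, ZMod.cast_id]
      ring
    rw [h1]
    push_cast [Nat.cast_sub (show 1 ≤ k by omega)]
    ring
  have hmcol : ∀ j : Fin k, m + ((j : ℕ) : ZMod n) =
      r + (((k - 1 + t + (j : ℕ) : ℕ)) : ZMod n) := by
    intro j
    rw [hmval]
    push_cast
    ring
  have hmat : (Matrix.of fun i j : Fin k =>
      Ideal.Quotient.mk (grJ k n)
        (grP k n (cSeg n (r + ((i : ℕ) : ZMod n)) (k - 1) ∪ {m + ((j : ℕ) : ZMod n)}))) =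
      ((Ideal.Quotient.mk (grJ k n)).mapMatrix
        (Matrix.of fun i j : Fin k =>
          grP k n (cSeg n (r + ((i : ℕ) : ZMod n)) (k - 1) ∪
            {r + (((k - 1 + t + (j : ℕ) : ℕ)) : ZMod n)}))) := by
    refine Matrix.ext fun i j => ?_
    simp only [Matrix.of_apply, RingHom.mapMatrix_apply, Matrix.map_apply]
    rw [hmcol j]
  rw [hmat, ← RingHom.map_det, detX_eq hk hkn r t ht, map_mul, map_prod]
  rw [mk_grP_consec hk hkn]
  rw [Finset.prod_congr rfl (fun i _ => mk_grP_consec hk hkn (r + ((i : ℕ) : ZMod n)))]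
  simp

theorem statement_part2 (r : ZMod n) (m : ZMod n)
    (hm : m ∈ cIcc n (r + (k : ZMod n)) (r - 2)) :
    Matrix.det (Matrix.of fun i j : Fin (k + 1) =>
      Ideal.Quotient.mk (grJ k n)
        (grP k n (cSeg n (r + ((i : ℕ) : ZMod n)) (k - 1) ∪ {m + ((j : ℕ) : ZMod n)}))) = 0 := by
  haveI : NeZero n := ⟨by omega⟩
  have hlen : ((r - 2) - (r + (k : ZMod n))).val = n - k - 2 := by
    have h1 : (r - 2) - (r + (k : ZMod n)) = (((n - k - 2 : ℕ)) : ZMod n) := by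
      have h2 : (((n - k - 2 : ℕ)) : ZMod n) = ((n : ℕ) : ZMod n) - (k : ZMod n) - 2 := by
        push_cast [Nat.cast_sub (show 2 ≤ n - k by omega), Nat.cast_sub (show k ≤ n by omega)]
        ring
      rw [h2, ZMod.natCast_self]
      ring
    rw [h1, ZMod.val_natCast, Nat.mod_eq_of_lt (by omega)]
  rw [cIcc, hlen] at hm
  rw [mem_cSeg (by omega)] at hm
  set t' := (m - (r + (k : ZMod n))).val with htdef
  have ht1 : t' ≤ n - k - 2 := by omega
  set t := t' + 1 with ht_def
  have hmval : m = r + (((k - 1 + t : ℕ)) : ZMod n) := by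
    have h1 : m = (r + (k : ZMod n)) + ((t' : ℕ) : ZMod n) := by
      rw [htdef, ZMod.natCast_val, ZMod.cast_id]
      ring
    rw [h1, ht_def]
    have h3 : k - 1 + (t' + 1) = k + t' := by omega
    rw [h3]
    push_cast
    ring
  have hmcol : ∀ j : Fin (k + 1), m + ((j : ℕ) : ZMod n) =
      r + (((k - 1 + t + (j : ℕ) : ℕ)) : ZMod n) := by
    intro j
    rw [hmval]
    push_cast
    ring
  have hmat : (Matrix.of fun i j : Fin (k + 1) =>
      Ideal.Quotient.mk (grJ k n)
        (grP k n (cSeg n (r + ((i : ℕ) : ZMod n)) (k - 1) ∪ {m + ((j : ℕ) : ZMod n)}))) =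
      ((Ideal.Quotient.mk (grJ k n)).mapMatrix
        (Matrix.of fun i j : Fin (k + 1) =>
          grP k n (cSeg n (r + ((i : ℕ) : ZMod n)) (k - 1) ∪
            {r + (((k - 1 + t + (j : ℕ) : ℕ)) : ZMod n)}))) := by
    refine Matrix.ext fun i j => ?_
    simp only [Matrix.of_apply, RingHom.mapMatrix_apply, Matrix.map_apply]
    rw [hmcol j]
  rw [hmat, ← RingHom.map_det]
  have hdet0 : Matrix.det (Matrix.of fun i j : Fin (k + 1) =>
      grP k n (cSeg n (r + ((i : ℕ) : ZMod n)) (k - 1) ∪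
        {r + (((k - 1 + t + (j : ℕ) : ℕ)) : ZMod n)})) = 0 := by
    apply Subtype.ext
    have hmapdet := RingHom.map_det ((grA k n).val.toRingHom)
      (Matrix.of fun i j : Fin (k + 1) =>
        grP k n (cSeg n (r + ((i : ℕ) : ZMod n)) (k - 1) ∪
          {r + (((k - 1 + t + (j : ℕ) : ℕ)) : ZMod n)}))
    have hz : ((Matrix.det (Matrix.of fun i j : Fin (k + 1) =>
        grP k n (cSeg n (r + ((i : ℕ) : ZMod n)) (k - 1) ∪
          {r + (((k - 1 + t + (j : ℕ) : ℕ)) : ZMod n)})) : grA k n) :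
        MvPolynomial (Fin k × ZMod n) ℂ) =
        Matrix.det (Matrix.of fun i j : Fin (k + 1) =>
          pluck (genericM k n) (cSeg n (r + ((i : ℕ) : ZMod n)) (k - 1) ∪
            {r + (((k - 1 + t + (j : ℕ) : ℕ)) : ZMod n)})) := by
      have hmat2 : ((grA k n).val.mapMatrix
          (Matrix.of fun i j : Fin (k + 1) =>
            grP k n (cSeg n (r + ((i : ℕ) : ZMod n)) (k - 1) ∪
              {r + (((k - 1 + t + (j : ℕ) : ℕ)) : ZMod n)}))) =
          (Matrix.of fun i j : Fin (k + 1) =>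
            pluck (genericM k n) (cSeg n (r + ((i : ℕ) : ZMod n)) (k - 1) ∪
              {r + (((k - 1 + t + (j : ℕ) : ℕ)) : ZMod n)})) := by
        refine Matrix.ext fun i j => ?_
        rfl
      rw [← hmat2]
      exact hmapdet
    rw [hz, core_ii hk hkn r t (by omega) (by omega)]
    rfl
  rw [hdet0, map_zero]

end Final

theorem statement0 (k n : ℕ) (hk : 2 ≤ k) (hkn : 2 * k ≤ n) :
    (∀ r : ZMod n, ∀ m ∈ cIcc n (r + (k : ZMod n) - 1) (r - 1),
      Matrix.det (Matrix.of fun i j : Fin k =>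
        Ideal.Quotient.mk (grJ k n)
          (grP k n (cSeg n (r + ((i : ℕ) : ZMod n)) (k - 1) ∪ {m + ((j : ℕ) : ZMod n)}))) = 1) ∧
    (∀ r : ZMod n, ∀ m ∈ cIcc n (r + (k : ZMod n)) (r - 2),
      Matrix.det (Matrix.of fun i j : Fin (k + 1) =>
        Ideal.Quotient.mk (grJ k n)
          (grP k n (cSeg n (r + ((i : ℕ) : ZMod n)) (k - 1) ∪ {m + ((j : ℕ) : ZMod n)}))) = 0) := by
  constructor
  · intro r m hm
    exact statement_part1 hk hkn r m hm
  · intro r m hm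
    exact statement_part2 hk hkn r m hm
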